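/- Consider gradient flow on a depth-L matrix factorization applied to an arbitrary matrix completion task with square factors W_l : [0,∞) → ℝ^{d×d}. Then the unbalancedness magnitude is a conserved quantity: denoting by ε(t) the unbalancedness magnitude of (W₁(t), …, W_L(t)), one has ε(t) = ε(0) for all t ≥ 0. In fact, for every l = 1,…,L−1 and all t ≥ 0, W_{l+1}(t)ᵀ W_{l+1}(t) − W_l(t) W_l(t)ᵀ = W_{l+1}(0)ᵀ W_{l+1}(0) − W_l(0) W_l(0)ᵀ. -/

import Mathlib

open Matrix

/-- The prefix product `W_{l−1}(t)⋯W_0(t)` of the first `l` factors (identity for `l = 0`). -/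
noncomputable def prodUpTo (d : ℕ) (W : ℕ → ℝ → Matrix (Fin d) (Fin d) ℝ) (l : ℕ)
    (t : ℝ) : Matrix (Fin d) (Fin d) ℝ :=
  (((List.range l).map fun i => W i t).reverse).prod

/-- The suffix product `W_{L−1}(t)⋯W_l(t)` of the last `L − l` factors (identity for `l = L`). -/
noncomputable def prodFrom (d L : ℕ) (W : ℕ → ℝ → Matrix (Fin d) (Fin d) ℝ) (l : ℕ)
    (t : ℝ) : Matrix (Fin d) (Fin d) ℝ :=
  (((List.range (L - l)).map fun i => W (l + i) t).reverse).prod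

/-- The gradient of the matrix-completion loss
`ℓ(W) = ½ Σ_{(i,j)∈Ω} (W_{ij} − b_{ij})²`: entry `W_{ij} − b_{ij}` on observed
locations, `0` elsewhere. -/
noncomputable def mcGradGen {d : ℕ} (Obs : Finset (Fin d × Fin d)) (b : Fin d → Fin d → ℝ)
    (A : Matrix (Fin d) (Fin d) ℝ) : Matrix (Fin d) (Fin d) ℝ :=
  Matrix.of fun i j => if (i, j) ∈ Obs then A i j - b i j else 0

/-- The nuclear norm `‖M‖_* = tr √(MᵀM)` of a real square matrix. -/
noncomputable def nuclearNorm {d : ℕ} (M : Matrix (Fin d) (Fin d) ℝ) : ℝ :=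
  ((Matrix.posSemidef_conjTranspose_mul_self M).1.eigenvectorUnitary.1 *
    Matrix.diagonal (fun i => Real.sqrt ((Matrix.posSemidef_conjTranspose_mul_self M).1.eigenvalues i)) *
    (star (Matrix.posSemidef_conjTranspose_mul_self M).1.eigenvectorUnitary :
      Matrix (Fin d) (Fin d) ℝ)).trace

lemma prodUpTo_succ (d : ℕ) (W : ℕ → ℝ → Matrix (Fin d) (Fin d) ℝ) (l : ℕ) (t : ℝ) :
    prodUpTo d W (l + 1) t = W l t * prodUpTo d W l t := by
  simp [prodUpTo, List.range_succ]

lemma prodFrom_succ (d L : ℕ) (W : ℕ → ℝ → Matrix (Fin d) (Fin d) ℝ) (l : ℕ) (t : ℝ)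
    (h : l + 1 < L) :
    prodFrom d L W (l + 1) t = prodFrom d L W (l + 2) t * W (l + 1) t := by
  have h1 : L - (l + 1) = (L - (l + 2)) + 1 := by omega
  have h2 : ((fun i => W (l + 1 + i) t) ∘ Nat.succ) = fun i => W (l + 2 + i) t := by
    funext i
    show W (l + 1 + (i + 1)) t = W (l + 2 + i) t
    have h3 : l + 1 + (i + 1) = l + 2 + i := by omega
    rw [h3]
  rw [prodFrom, prodFrom, h1, List.range_succ_eq_map, List.map_cons, List.reverse_cons,
    List.prod_append, List.prod_cons, List.prod_nil, mul_one, List.map_map, h2]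

/-- **Unbalancedness magnitude is conserved under gradient flow.**
For gradient flow on a depth-`L` matrix factorization applied to an arbitrary matrix
completion task (observed locations `Obs`, values `b`) with square factors:
for every `l` with `l+1 < L` and every `t ≥ 0`,
`W_{l+1}(t)ᵀW_{l+1}(t) − W_l(t)W_l(t)ᵀ = W_{l+1}(0)ᵀW_{l+1}(0) − W_l(0)W_l(0)ᵀ`;
consequently the unbalancedness magnitude `ε(t)` satisfies `ε(t) = ε(0)`. -/
theorem unbalancedness_conserved
    (d L : ℕ)
    (Obs : Finset (Fin d × Fin d)) (b : Fin d → Fin d → ℝ)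
    (W : ℕ → ℝ → Matrix (Fin d) (Fin d) ℝ)
    (hGF : ∀ l, l < L → ∀ t : ℝ, 0 ≤ t → ∀ i j,
      HasDerivAt (fun s => W l s i j)
        ((-((prodFrom d L W (l + 1) t)ᵀ * mcGradGen Obs b (prodUpTo d W L t) *
            (prodUpTo d W l t)ᵀ)) i j) t) :
    (∀ l, l + 1 < L → ∀ t : ℝ, 0 ≤ t →
      (W (l + 1) t)ᵀ * W (l + 1) t - W l t * (W l t)ᵀ =
        (W (l + 1) 0)ᵀ * W (l + 1) 0 - W l 0 * (W l 0)ᵀ) ∧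
    (∀ t : ℝ, 0 ≤ t →
      sSup {r : ℝ | ∃ l, l + 1 < L ∧
          r = nuclearNorm ((W (l + 1) t)ᵀ * W (l + 1) t - W l t * (W l t)ᵀ)} =
        sSup {r : ℝ | ∃ l, l + 1 < L ∧
          r = nuclearNorm ((W (l + 1) 0)ᵀ * W (l + 1) 0 - W l 0 * (W l 0)ᵀ)}) := by
  -- abbreviation for the derivative matrix of the l-th factor at time t
  set D : ℕ → ℝ → Matrix (Fin d) (Fin d) ℝ := fun l t =>
    -((prodFrom d L W (l + 1) t)ᵀ * mcGradGen Obs b (prodUpTo d W L t) *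
        (prodUpTo d W l t)ᵀ) with hD
  -- key algebraic identity
  have hkey : ∀ l, l + 1 < L → ∀ t : ℝ,
      (W (l + 1) t)ᵀ * D (l + 1) t = D l t * (W l t)ᵀ := by
    intro l hl t
    have hP : prodFrom d L W (l + 1) t = prodFrom d L W (l + 2) t * W (l + 1) t :=
      prodFrom_succ d L W l t hl
    have hQ : prodUpTo d W (l + 1) t = W l t * prodUpTo d W l t := prodUpTo_succ d W l t
    show (W (l + 1) t)ᵀ *
        -((prodFrom d L W (l + 1 + 1) t)ᵀ * mcGradGen Obs b (prodUpTo d W L t) *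
          (prodUpTo d W (l + 1) t)ᵀ) =
      -((prodFrom d L W (l + 1) t)ᵀ * mcGradGen Obs b (prodUpTo d W L t) *
          (prodUpTo d W l t)ᵀ) * (W l t)ᵀ
    rw [hQ, hP, Matrix.transpose_mul, Matrix.transpose_mul, Matrix.mul_neg, Matrix.neg_mul]
    simp only [Matrix.mul_assoc]
  -- the zero-derivative statement for the balancedness discrepancy
  have key : ∀ l, l + 1 < L → ∀ t : ℝ, 0 ≤ t → ∀ i j,
      HasDerivAt (fun s => ((W (l + 1) s)ᵀ * W (l + 1) s - W l s * (W l s)ᵀ) i j) 0 t := by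
    intro l hl t ht i j
    have h1 : ∀ i j, HasDerivAt (fun s => W (l + 1) s i j) (D (l + 1) t i j) t :=
      hGF (l + 1) (by omega) t ht
    have h0 : ∀ i j, HasDerivAt (fun s => W l s i j) (D l t i j) t :=
      hGF l (by omega) t ht
    have hM : (D (l + 1) t)ᵀ * W (l + 1) t + (W (l + 1) t)ᵀ * D (l + 1) t
        = D l t * (W l t)ᵀ + W l t * (D l t)ᵀ := by
      have h := hkey l hl t
      calc (D (l + 1) t)ᵀ * W (l + 1) t + (W (l + 1) t)ᵀ * D (l + 1) t
          = ((W (l + 1) t)ᵀ * D (l + 1) t)ᵀ + (W (l + 1) t)ᵀ * D (l + 1) t := by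
            rw [Matrix.transpose_mul, Matrix.transpose_transpose]
        _ = (D l t * (W l t)ᵀ)ᵀ + D l t * (W l t)ᵀ := by rw [h]
        _ = W l t * (D l t)ᵀ + D l t * (W l t)ᵀ := by
            rw [Matrix.transpose_mul, Matrix.transpose_transpose]
        _ = D l t * (W l t)ᵀ + W l t * (D l t)ᵀ := by abel
    have e1 : HasDerivAt (fun s => ((W (l + 1) s)ᵀ * W (l + 1) s) i j)
        (((D (l + 1) t)ᵀ * W (l + 1) t + (W (l + 1) t)ᵀ * D (l + 1) t) i j) t := by
      simp only [Matrix.mul_apply, Matrix.transpose_apply, Matrix.add_apply,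
        ← Finset.sum_add_distrib]
      exact HasDerivAt.fun_sum fun k _ => (h1 k i).mul (h1 k j)
    have e0 : HasDerivAt (fun s => (W l s * (W l s)ᵀ) i j)
        ((D l t * (W l t)ᵀ + W l t * (D l t)ᵀ) i j) t := by
      simp only [Matrix.mul_apply, Matrix.transpose_apply, Matrix.add_apply,
        ← Finset.sum_add_distrib]
      exact HasDerivAt.fun_sum fun k _ => (h0 i k).mul (h0 j k)
    have := e1.fun_sub e0
    simp only [Matrix.sub_apply] at this ⊢
    refine this.congr_deriv ?_
    rw [hM]
    ring
  -- constancy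
  have hconst : ∀ l, l + 1 < L → ∀ t : ℝ, 0 ≤ t →
      (W (l + 1) t)ᵀ * W (l + 1) t - W l t * (W l t)ᵀ =
        (W (l + 1) 0)ᵀ * W (l + 1) 0 - W l 0 * (W l 0)ᵀ := by
    intro l hl t ht
    ext i j
    have hcont : ContinuousOn (fun s => ((W (l + 1) s)ᵀ * W (l + 1) s - W l s * (W l s)ᵀ) i j)
        (Set.Icc 0 t) := fun x hx =>
      ((key l hl x hx.1 i j).continuousAt).continuousWithinAt
    have hd : ∀ x ∈ Set.Ico (0:ℝ) t,
        HasDerivWithinAt (fun s => ((W (l + 1) s)ᵀ * W (l + 1) s - W l s * (W l s)ᵀ) i j)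
          0 (Set.Ici x) x := fun x hx => (key l hl x hx.1 i j).hasDerivWithinAt
    exact constant_of_has_deriv_right_zero hcont hd t (Set.mem_Icc.2 ⟨ht, le_refl t⟩)
  refine ⟨hconst, fun t ht => ?_⟩
  have hset : {r : ℝ | ∃ l, l + 1 < L ∧
        r = nuclearNorm ((W (l + 1) t)ᵀ * W (l + 1) t - W l t * (W l t)ᵀ)} =
      {r : ℝ | ∃ l, l + 1 < L ∧
        r = nuclearNorm ((W (l + 1) 0)ᵀ * W (l + 1) 0 - W l 0 * (W l 0)ᵀ)} := by
    ext r
    simp only [Set.mem_setOf_eq]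
    constructor
    · rintro ⟨l, hl, rfl⟩
      exact ⟨l, hl, by rw [hconst l hl t ht]⟩
    · rintro ⟨l, hl, rfl⟩
      exact ⟨l, hl, by rw [hconst l hl t ht]⟩
  rw [hset]
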